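/- If τ ∈ [0,1] is a threshold for V and T(τ) ≥ τ, then V(p) = C_L/(1−β) for every p ∈ [τ, 1]. -/

import Mathlib

/-- Two-state consumer model: transition probabilities `lNA ≤ lAA`, costs
`CHN ≤ CL ≤ CHA`, discount factor `β ∈ (0,1)`. -/
structure CouponModel where
  lNA : ℝ
  lAA : ℝ
  CHN : ℝ
  CL : ℝ
  CHA : ℝ
  β : ℝ
  lNA_nonneg : 0 ≤ lNA
  lNA_le_lAA : lNA ≤ lAA
  lAA_le_one : lAA ≤ 1
  CHN_le_CL : CHN ≤ CL
  CL_le_CHA : CL ≤ CHA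
  β_pos : 0 < β
  β_lt_one : β < 1

namespace CouponModel

/-- Belief-update map `T(p) = (1-p)·λNA + p·λAA`. -/
noncomputable def T (M : CouponModel) (p : ℝ) : ℝ := (1 - p) * M.lNA + p * M.lAA

/-- Bellman operator. -/
noncomputable def B (M : CouponModel) (f : ℝ → ℝ) (p : ℝ) : ℝ :=
  min (M.CL + M.β * f (M.T p))
    ((1 - p) * M.CHN + p * M.CHA + M.β * ((1 - p) * f M.lNA + p * f M.lAA))

/-- A function `f : ℝ → ℝ` is bounded on the belief space `[0,1]`. -/
def IsBdd (f : ℝ → ℝ) : Prop := ∃ C : ℝ, ∀ p ∈ Set.Icc (0:ℝ) 1, |f p| ≤ C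

/-- `V` is a bounded fixed point of the Bellman operator on `[0,1]`. -/
def IsValue (M : CouponModel) (V : ℝ → ℝ) : Prop :=
  IsBdd V ∧ ∀ p ∈ Set.Icc (0:ℝ) 1, V p = M.B V p

/-- Value of offering the low-privacy coupon at belief `p`. -/
noncomputable def LPval (M : CouponModel) (V : ℝ → ℝ) (p : ℝ) : ℝ :=
  M.CL + M.β * V (M.T p)

/-- Value of offering the high-privacy coupon at belief `p`. -/
noncomputable def HPval (M : CouponModel) (V : ℝ → ℝ) (p : ℝ) : ℝ :=
  (1 - p) * M.CHN + p * M.CHA + M.β * ((1 - p) * V M.lNA + p * V M.lAA)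

/-- `τ` is a threshold for `V`: HP is optimal below `τ`, LP is optimal above `τ`. -/
def IsThreshold (M : CouponModel) (V : ℝ → ℝ) (τ : ℝ) : Prop :=
  τ ∈ Set.Icc (0:ℝ) 1 ∧
    (∀ p ∈ Set.Icc (0:ℝ) τ, V p = M.HPval V p) ∧
    (∀ p ∈ Set.Icc τ (1:ℝ), V p = M.LPval V p)

end CouponModel

/-- If `τ` is a threshold for `V` and `T(τ) ≥ τ`, then `V(p) = C_L/(1-β)`
for every `p ∈ [τ,1]`. -/
theorem value_on_lp_region (M : CouponModel) (V : ℝ → ℝ) (hV : M.IsValue V)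
    (τ : ℝ) (hτ : M.IsThreshold V τ) (hT : τ ≤ M.T τ) :
    ∀ p ∈ Set.Icc τ (1:ℝ), V p = M.CL / (1 - M.β) := by
  obtain ⟨⟨C, hC⟩, hfix⟩ := hV
  obtain ⟨⟨hτ0, hτ1⟩, _, hLP⟩ := hτ
  have hβ1 : (1:ℝ) - M.β ≠ 0 := by have := M.β_lt_one; linarith
  set c : ℝ := M.CL / (1 - M.β) with hc
  have hcfix : M.CL + M.β * c = c := by rw [hc]; field_simp; ring
  -- forward invariance of [τ,1]
  have hTmem : ∀ p ∈ Set.Icc τ (1:ℝ), M.T p ∈ Set.Icc τ (1:ℝ) := by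
    rintro p ⟨hp1, hp2⟩
    have h1 := M.lNA_le_lAA
    have h2 := M.lAA_le_one
    have h3 := M.lNA_nonneg
    constructor
    · have : M.T τ ≤ M.T p := by
        unfold CouponModel.T; nlinarith
      linarith
    · unfold CouponModel.T; nlinarith
  have hsub : ∀ p ∈ Set.Icc τ (1:ℝ), p ∈ Set.Icc (0:ℝ) 1 := by
    rintro p ⟨hp1, hp2⟩; exact ⟨le_trans hτ0 hp1, hp2⟩
  -- recursion
  have hrec : ∀ p ∈ Set.Icc τ (1:ℝ), V p - c = M.β * (V (M.T p) - c) := by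
    intro p hp
    have := hLP p hp
    unfold CouponModel.LPval at this
    rw [this]; linarith [hcfix]
  set K : ℝ := C + |c| with hK
  have hbound : ∀ n : ℕ, ∀ p ∈ Set.Icc τ (1:ℝ), |V p - c| ≤ M.β ^ n * K := by
    intro n
    induction n with
    | zero =>
      intro p hp
      simp only [pow_zero, one_mul, hK]
      calc |V p - c| ≤ |V p| + |c| := abs_sub _ _
        _ ≤ C + |c| := by linarith [hC p (hsub p hp)]
    | succ n ih =>
      intro p hp
      rw [hrec p hp, abs_mul, abs_of_pos M.β_pos, pow_succ, mul_comm (M.β ^ n) M.β,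
        mul_assoc]
      exact mul_le_mul_of_nonneg_left (ih _ (hTmem p hp)) M.β_pos.le
  intro p hp
  have hzero : |V p - c| ≤ 0 := by
    have hlim : Filter.Tendsto (fun n : ℕ => M.β ^ n * K) Filter.atTop (nhds 0) := by
      have := tendsto_pow_atTop_nhds_zero_of_lt_one M.β_pos.le M.β_lt_one
      simpa using this.mul_const K
    exact ge_of_tendsto hlim (Filter.Eventually.of_forall fun n => hbound n p hp)
  have : V p - c = 0 := abs_eq_zero.mp (le_antisymm hzero (abs_nonneg _))
  linarith
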